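/- A sequence F = {f_i}_{i in I} in H is a K-frame for H if and only if the synthesis map T_F : ℓ²(I) → H, {c_i} ↦ Σ_i c_i f_i, is well defined (the series converges for every {c_i} in ℓ²(I)) and the range of K is contained in the range of T_F. Moreover, in the backward direction, F is a K-frame with lower bound 1/(‖T_F†‖²·‖K‖²), where T_F† is the pseudo-inverse of T_F. -/

import Mathlib

open scoped ComplexInnerProductSpace

set_option linter.unusedSectionVars false
set_option maxHeartbeats 1000000

section Aux1

open ContinuousLinearMap
open scoped ENNReal

variable {E F : Type*} [NormedAddCommGroup E] [InnerProductSpace ℂ E] [CompleteSpace E]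
  [NormedAddCommGroup F] [InnerProductSpace ℂ F] [CompleteSpace F]

/-- majorization of inner products implies range membership -/
lemma aux_majorization (T : E →L[ℂ] F) (y : F) (M : ℝ)
    (h : ∀ x : F, ‖(⟪x, y⟫ : ℂ)‖ ≤ M * ‖(ContinuousLinearMap.adjoint T) x‖) :
    ∃ c : E, T c = y := by
  set A := ContinuousLinearMap.adjoint T with hA
  set A' : F →ₗ[ℂ] E := (A : F →ₗ[ℂ] E) with hA'
  set φ : F →ₗ[ℂ] ℂ := ((innerSL ℂ y : F →L[ℂ] ℂ) : F →ₗ[ℂ] ℂ) with hφ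
  have hker : LinearMap.ker A' ≤ LinearMap.ker φ := by
    intro x hx
    have hx0 : A x = 0 := hx
    have h1 : ‖(⟪x, y⟫ : ℂ)‖ ≤ 0 := by simpa [hx0] using h x
    have h2 : (⟪x, y⟫ : ℂ) = 0 := by
      have := norm_nonneg (⟪x, y⟫ : ℂ)
      have : ‖(⟪x, y⟫ : ℂ)‖ = 0 := le_antisymm h1 this
      simpa using this
    simp only [LinearMap.mem_ker, hφ]
    simpa [inner_eq_zero_symm] using h2
  set e := LinearMap.quotKerEquivRange A' with he
  set ℓ₀ : LinearMap.range A' →ₗ[ℂ] ℂ :=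
    (Submodule.liftQ (LinearMap.ker A') φ hker) ∘ₗ (e.symm : LinearMap.range A' →ₗ[ℂ] _) with hℓ₀
  have key : ∀ x : F, ℓ₀ ⟨A x, LinearMap.mem_range_self A' x⟩ = (⟪y, x⟫ : ℂ) := by
    intro x
    have h1 : e (Submodule.Quotient.mk x) = ⟨A' x, LinearMap.mem_range_self A' x⟩ :=
      Subtype.ext (LinearMap.quotKerEquivRange_apply_mk A' x)
    have h2 : e.symm ⟨A' x, LinearMap.mem_range_self A' x⟩ = Submodule.Quotient.mk x := by
      rw [← h1]; exact e.symm_apply_apply _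
    simp only [hℓ₀, LinearMap.comp_apply, LinearEquiv.coe_coe]
    rw [show ((⟨A x, LinearMap.mem_range_self A' x⟩ : LinearMap.range A')) =
      ⟨A' x, LinearMap.mem_range_self A' x⟩ from rfl, h2]
    simp [hφ]
  have bound : ∀ w : LinearMap.range A', ‖ℓ₀ w‖ ≤ M * ‖w‖ := by
    rintro ⟨w, hw⟩
    obtain ⟨x, hx⟩ := hw
    have hww : (⟨w, ⟨x, hx⟩⟩ : LinearMap.range A') = ⟨A x, LinearMap.mem_range_self A' x⟩ := by
      exact Subtype.ext hx.symm
    rw [hww, key]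
    have : ‖(⟪y, x⟫ : ℂ)‖ = ‖(⟪x, y⟫ : ℂ)‖ := by
      rw [← inner_conj_symm x y]; exact (RCLike.norm_conj _).symm
    rw [this]
    have hnorm : ‖(⟨A x, LinearMap.mem_range_self A' x⟩ : LinearMap.range A')‖ = ‖A x‖ := rfl
    calc ‖(⟪x, y⟫ : ℂ)‖ ≤ M * ‖A x‖ := h x
    _ = M * ‖(⟨A x, LinearMap.mem_range_self A' x⟩ : LinearMap.range A')‖ := by rw [hnorm]
    _ = _ := by rw [← hww]
  set ℓ : LinearMap.range A' →L[ℂ] ℂ := LinearMap.mkContinuous ℓ₀ M bound with hℓ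
  obtain ⟨g, hg, -⟩ := exists_extension_norm_eq (LinearMap.range A') ℓ
  set c := (InnerProductSpace.toDual ℂ E).symm g with hc
  refine ⟨c, ?_⟩
  apply ext_inner_left ℂ
  intro v
  have h1 : (⟪v, T c⟫ : ℂ) = ⟪A v, c⟫ := (ContinuousLinearMap.adjoint_inner_left T c v).symm
  have h2 : (⟪c, A v⟫ : ℂ) = g (A v) := InnerProductSpace.toDual_symm_apply
  have h3 : g (A v) = ℓ ⟨A v, LinearMap.mem_range_self A' v⟩ :=
    hg ⟨A v, LinearMap.mem_range_self A' v⟩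
  have h4 : ℓ ⟨A v, LinearMap.mem_range_self A' v⟩ = (⟪y, v⟫ : ℂ) := key v
  rw [h1, ← inner_conj_symm (A v) c, h2, h3, h4, inner_conj_symm]

/-- Douglas factorization: range inclusion gives a bounded factor. -/
lemma aux_factor (T : E →L[ℂ] F) (K : F →L[ℂ] F) (hr : Set.range ⇑K ⊆ Set.range ⇑T) :
    ∃ L : F →L[ℂ] E, ∀ x, T (L x) = K x := by
  set N : Submodule ℂ E := LinearMap.ker (T : E →ₗ[ℂ] F) with hN
  haveI : CompleteSpace N := (ContinuousLinearMap.isClosed_ker T).completeSpace_coe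
  set P := Submodule.orthogonalProjection Nᗮ with hP
  have hTP : ∀ c : E, T ((P c : E)) = T c := by
    intro c
    have h1 : c - (P c : E) ∈ Nᗮᗮ := Submodule.sub_starProjection_mem_orthogonal (K := Nᗮ) c
    have h3 : c - (P c : E) ∈ N := (Submodule.orthogonal_orthogonal N).le h1
    have h4 : T c - T (P c : E) = 0 := by
      rw [← map_sub]; exact h3
    rw [sub_eq_zero] at h4; exact h4.symm
  have hmem : ∀ x : F, K x ∈ Set.range ⇑T := fun x => hr (Set.mem_range_self x)
  set g : F → E := fun x => (P (Classical.choose (hmem x)) : E) with hg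
  have hg1 : ∀ x, T (g x) = K x := by
    intro x
    rw [hg]; dsimp only
    rw [hTP]; exact Classical.choose_spec (hmem x)
  have hg2 : ∀ x, g x ∈ Nᗮ := fun x => (P (Classical.choose (hmem x))).2
  have hzero : ∀ c : E, c ∈ Nᗮ → c ∈ N → c = 0 := by
    intro c h1 h2
    have := (Submodule.mem_orthogonal N c).1 h1 c h2
    simpa [inner_self_eq_zero] using this
  have huniq : ∀ (x : F) (c : E), c ∈ Nᗮ → T c = K x → c = g x := by
    intro x c hc hTc
    have hd : c - g x ∈ Nᗮ := Submodule.sub_mem _ hc (hg2 x)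
    have hd2 : c - g x ∈ N := by
      have : T (c - g x) = 0 := by rw [map_sub, hTc, hg1, sub_self]
      exact this
    have := hzero _ hd hd2
    rwa [sub_eq_zero] at this
  set L₀ : F →ₗ[ℂ] E :=
    { toFun := g
      map_add' := by
        intro x y
        refine (huniq (x + y) (g x + g y) (Submodule.add_mem _ (hg2 x) (hg2 y)) ?_).symm
        rw [map_add, hg1, hg1, map_add]
      map_smul' := by
        intro a x
        refine (huniq (a • x) (a • g x) (Submodule.smul_mem _ a (hg2 x)) ?_).symm
        rw [map_smul, hg1, map_smul] } with hL₀
  have hclosed : ∀ (u : ℕ → F) (x y), Filter.Tendsto u Filter.atTop (nhds x) →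
      Filter.Tendsto (⇑L₀ ∘ u) Filter.atTop (nhds y) → y = L₀ x := by
    intro u x y hu hLu
    have hyN : y ∈ Nᗮ := by
      refine (Submodule.isClosed_orthogonal N).mem_of_tendsto hLu ?_
      exact Filter.Eventually.of_forall fun n => hg2 (u n)
    have h1 : Filter.Tendsto (fun n => T (L₀ (u n))) Filter.atTop (nhds (T y)) :=
      (T.continuous.tendsto y).comp hLu
    have h2 : Filter.Tendsto (fun n => K (u n)) Filter.atTop (nhds (K x)) :=
      (K.continuous.tendsto x).comp hu
    have h3 : (fun n => T (L₀ (u n))) = fun n => K (u n) := funext fun n => hg1 (u n)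
    have hTy : T y = K x := tendsto_nhds_unique (h3 ▸ h1) h2
    exact huniq x y hyN hTy
  exact ⟨ContinuousLinearMap.ofSeqClosedGraph hclosed, fun x => hg1 x⟩


end Aux1

section Aux2

open ContinuousLinearMap
open scoped ENNReal

variable {H : Type*} [NormedAddCommGroup H] [InnerProductSpace ℂ H] [CompleteSpace H]
  {I : Type*}

/-- coordinate evaluation on ℓ² as a continuous linear map -/
noncomputable def aux_ev (i : I) : lp (fun _ : I => ℂ) 2 →L[ℂ] ℂ :=
  LinearMap.mkContinuous
    { toFun := fun c => c i
      map_add' := fun c d => by simp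
      map_smul' := fun a c => by simp } 1
    (fun c => by
      show ‖c i‖ ≤ 1 * ‖c‖
      simpa using lp.norm_apply_le_norm (by norm_num : (2 : ℝ≥0∞) ≠ 0) c i)

@[simp] lemma aux_ev_apply (i : I) (c : lp (fun _ : I => ℂ) 2) : aux_ev i c = c i := rfl

/-- partial-sum synthesis operators -/
noncomputable def aux_TS (f : I → H) (S : Finset I) : lp (fun _ : I => ℂ) 2 →L[ℂ] H :=
  ∑ i ∈ S, (aux_ev i).smulRight (f i)

lemma aux_TS_apply (f : I → H) (S : Finset I) (c : lp (fun _ : I => ℂ) 2) :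
    aux_TS f S c = ∑ i ∈ S, c i • f i := by
  simp [aux_TS, ContinuousLinearMap.sum_apply]

/-- construction of the synthesis operator from pointwise summability -/
lemma aux_synthesis (f : I → H)
    (h : ∀ c : lp (fun _ : I => ℂ) 2, Summable fun i => c i • f i) :
    ∃ T : lp (fun _ : I => ℂ) 2 →L[ℂ] H,
      ∀ c : lp (fun _ : I => ℂ) 2, HasSum (fun i => c i • f i) (T c) := by
  -- pointwise boundedness of partial sums
  classical
  have hpt : ∀ c : lp (fun _ : I => ℂ) 2, ∃ C, ∀ S : Finset I, ‖aux_TS f S c‖ ≤ C := by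
    intro c
    obtain ⟨s₀, hs₀⟩ := summable_iff_vanishing_norm.1 (h c) 1 one_pos
    refine ⟨1 + ∑ i ∈ s₀, ‖c i • f i‖, fun S => ?_⟩
    rw [aux_TS_apply]
    have hsplit : ∑ i ∈ S, c i • f i = (∑ i ∈ S ∩ s₀, c i • f i) + ∑ i ∈ S \ s₀, c i • f i := by
      rw [Finset.sum_inter_add_sum_sdiff]
    rw [hsplit]
    refine (norm_add_le _ _).trans ?_
    have h1 : ‖∑ i ∈ S ∩ s₀, c i • f i‖ ≤ ∑ i ∈ s₀, ‖c i • f i‖ :=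
      (norm_sum_le _ _).trans (Finset.sum_le_sum_of_subset_of_nonneg
        (Finset.inter_subset_right) (fun _ _ _ => norm_nonneg _))
    have h2 : ‖∑ i ∈ S \ s₀, c i • f i‖ ≤ 1 :=
      (hs₀ _ (Finset.sdiff_disjoint)).le
    linarith
  obtain ⟨C', hC'⟩ := banach_steinhaus hpt
  have hbound : ∀ c : lp (fun _ : I => ℂ) 2, ‖∑' i, c i • f i‖ ≤ C' * ‖c‖ := by
    intro c
    have hhs := (h c).hasSum
    have htend : Filter.Tendsto (fun S : Finset I => ‖∑ i ∈ S, c i • f i‖)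
        Filter.atTop (nhds ‖∑' i, c i • f i‖) := hhs.norm
    refine le_of_tendsto' htend fun S => ?_
    calc ‖∑ i ∈ S, c i • f i‖ = ‖aux_TS f S c‖ := by rw [aux_TS_apply]
    _ ≤ ‖aux_TS f S‖ * ‖c‖ := (aux_TS f S).le_opNorm c
    _ ≤ C' * ‖c‖ := mul_le_mul_of_nonneg_right (hC' S) (norm_nonneg c)
  set T : lp (fun _ : I => ℂ) 2 →L[ℂ] H := LinearMap.mkContinuous
    { toFun := fun c => ∑' i, c i • f i
      map_add' := fun c d => by
        have hfun : (fun i => ((c + d : lp (fun _ : I => ℂ) 2) i) • f i)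
            = fun i => c i • f i + d i • f i := by
          funext i; rw [lp.coeFn_add]; simp [add_smul]
        dsimp only
        rw [hfun]
        exact ((h c).hasSum.add (h d).hasSum).tsum_eq
      map_smul' := fun a c => by
        have hfun : (fun i => ((a • c : lp (fun _ : I => ℂ) 2) i) • f i)
            = fun i => a • (c i • f i) := by
          funext i; rw [lp.coeFn_smul]; simp [smul_smul]
        dsimp only [RingHom.id_apply]
        rw [hfun]
        exact ((h c).hasSum.const_smul a).tsum_eq } C' hbound with hT
  exact ⟨T, fun c => (h c).hasSum⟩

lemma aux_adjoint_coord (f : I → H) (T : lp (fun _ : I => ℂ) 2 →L[ℂ] H)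
    (hT : ∀ c : lp (fun _ : I => ℂ) 2, HasSum (fun i => c i • f i) (T c)) (x : H) (i : I) :
    ‖(ContinuousLinearMap.adjoint T x) i‖ = ‖(⟪x, f i⟫ : ℂ)‖ := by
  classical
  set d := ContinuousLinearMap.adjoint T x with hd
  have hfi : T (lp.single 2 i (1 : ℂ)) = f i := by
    have h1 := hT (lp.single 2 i (1 : ℂ))
    have h2 : (fun j => ((lp.single 2 i (1 : ℂ) : lp (fun _ : I => ℂ) 2)) j • f j) = fun j => if j = i then f i else 0 := by
      funext j
      by_cases hj : j = i
      · subst hj; simp [lp.single_apply_self]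
      · simp [lp.single_apply_ne _ _ _ hj, hj]
    rw [h2] at h1
    exact h1.unique (hasSum_ite_eq i (f i))
  have h3 : (⟪d, lp.single 2 i (1 : ℂ)⟫ : ℂ) = ⟪x, f i⟫ := by
    rw [ContinuousLinearMap.adjoint_inner_left T _ x, hfi]
  rw [lp.inner_single_right] at h3
  have h4 : (starRingEnd ℂ) (d i) = ⟪x, f i⟫ := by
    simpa using h3
  rw [← h4]
  exact (RCLike.norm_conj _).symm

lemma aux_adjoint (f : I → H) (T : lp (fun _ : I => ℂ) 2 →L[ℂ] H)
    (hT : ∀ c : lp (fun _ : I => ℂ) 2, HasSum (fun i => c i • f i) (T c)) (x : H) :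
    (Summable fun i => ‖(⟪x, f i⟫ : ℂ)‖ ^ 2) ∧
      ∑' i, ‖(⟪x, f i⟫ : ℂ)‖ ^ 2 = ‖ContinuousLinearMap.adjoint T x‖ ^ 2 := by
  set d := ContinuousLinearMap.adjoint T x with hd
  have htr : ((2 : ℝ≥0∞).toReal) = ((2 : ℕ) : ℝ) := by norm_num
  have hfun : (fun i => ‖d i‖ ^ ((2 : ℝ≥0∞).toReal)) = fun i => ‖(⟪x, f i⟫ : ℂ)‖ ^ (2 : ℕ) := by
    funext i
    rw [htr, Real.rpow_natCast, aux_adjoint_coord f T hT x i]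
  have hsum : Summable fun i => ‖d i‖ ^ ((2 : ℝ≥0∞).toReal) :=
    (lp.memℓp d).summable (by norm_num)
  constructor
  · rwa [hfun] at hsum
  · have h5 : ‖d‖ ^ ((2 : ℝ≥0∞).toReal) = ∑' i, ‖d i‖ ^ ((2 : ℝ≥0∞).toReal) :=
      lp.norm_rpow_eq_tsum (by norm_num) d
    rw [hfun] at h5
    rw [← h5, htr, Real.rpow_natCast]

lemma aux_finite_bessel (f : I → H) (B : ℝ) (hB : 0 ≤ B)
    (hf : ∀ x : H, (Summable fun i => ‖(⟪x, f i⟫ : ℂ)‖ ^ 2) ∧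
      ∑' i, ‖(⟪x, f i⟫ : ℂ)‖ ^ 2 ≤ B * ‖x‖ ^ 2)
    (c : lp (fun _ : I => ℂ) 2) (t : Finset I) :
    ‖∑ i ∈ t, c i • f i‖ ^ 2 ≤ B * ∑ i ∈ t, ‖c i‖ ^ 2 := by
  set v := ∑ i ∈ t, c i • f i with hv
  have hS : (0:ℝ) ≤ ∑ i ∈ t, ‖c i‖ ^ 2 :=
    Finset.sum_nonneg fun _ _ => sq_nonneg _
  have hnormsq : ‖v‖ ^ 2 = ‖(⟪v, v⟫ : ℂ)‖ := by
    rw [inner_self_eq_norm_sq_to_K]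
    simp [norm_pow]
  have hinner : (⟪v, v⟫ : ℂ) = ∑ i ∈ t, c i * ⟪v, f i⟫ := by
    rw [hv]
    rw [inner_sum]
    exact Finset.sum_congr rfl fun i _ => inner_smul_right _ _ _
  have hW : ‖(⟪v, v⟫ : ℂ)‖ ≤ ∑ i ∈ t, ‖c i‖ * ‖(⟪v, f i⟫ : ℂ)‖ := by
    rw [hinner]
    refine (norm_sum_le _ _).trans ?_
    exact Finset.sum_le_sum fun i _ => by rw [norm_mul]
  have hCS : (∑ i ∈ t, ‖c i‖ * ‖(⟪v, f i⟫ : ℂ)‖) ^ 2 ≤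
      (∑ i ∈ t, ‖c i‖ ^ 2) * ∑ i ∈ t, ‖(⟪v, f i⟫ : ℂ)‖ ^ 2 :=
    Finset.sum_mul_sq_le_sq_mul_sq t _ _
  have htail : ∑ i ∈ t, ‖(⟪v, f i⟫ : ℂ)‖ ^ 2 ≤ B * ‖v‖ ^ 2 :=
    le_trans (Summable.sum_le_tsum t (fun i _ => sq_nonneg _) (hf v).1) (hf v).2
  by_cases ha : ‖v‖ ^ 2 = 0
  · rw [ha]; positivity
  · have hapos : 0 < ‖v‖ ^ 2 := lt_of_le_of_ne (sq_nonneg _) (Ne.symm ha)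
    set W := ∑ i ∈ t, ‖c i‖ * ‖(⟪v, f i⟫ : ℂ)‖ with hWdef
    have hWnn : 0 ≤ W := Finset.sum_nonneg fun i _ =>
      mul_nonneg (norm_nonneg _) (norm_nonneg _)
    have h1 : ‖v‖ ^ 2 ≤ W := le_trans (le_of_eq hnormsq) hW
    have h2 : (‖v‖ ^ 2) * (‖v‖ ^ 2) ≤ (B * ∑ i ∈ t, ‖c i‖ ^ 2) * ‖v‖ ^ 2 := by
      calc (‖v‖ ^ 2) * (‖v‖ ^ 2) ≤ W * W := mul_le_mul h1 h1 (sq_nonneg _) hWnn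
      _ = W ^ 2 := (sq W).symm
      _ ≤ (∑ i ∈ t, ‖c i‖ ^ 2) * ∑ i ∈ t, ‖(⟪v, f i⟫ : ℂ)‖ ^ 2 := hCS
      _ ≤ (∑ i ∈ t, ‖c i‖ ^ 2) * (B * ‖v‖ ^ 2) :=
        mul_le_mul_of_nonneg_left htail hS
      _ = (B * ∑ i ∈ t, ‖c i‖ ^ 2) * ‖v‖ ^ 2 := by ring
    exact le_of_mul_le_mul_right h2 hapos

lemma aux_bessel_summable (f : I → H) (B : ℝ) (hB : 0 < B)
    (hf : ∀ x : H, (Summable fun i => ‖(⟪x, f i⟫ : ℂ)‖ ^ 2) ∧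
      ∑' i, ‖(⟪x, f i⟫ : ℂ)‖ ^ 2 ≤ B * ‖x‖ ^ 2)
    (c : lp (fun _ : I => ℂ) 2) : Summable fun i => c i • f i := by
  have hc2 : Summable fun i => ‖c i‖ ^ (2:ℕ) := by
    have := (lp.memℓp c).summable (p := 2) (by norm_num)
    have hfun : (fun i => ‖c i‖ ^ ((2:ℝ≥0∞).toReal)) = fun i => ‖c i‖ ^ (2:ℕ) := by
      funext i
      rw [show ((2:ℝ≥0∞).toReal) = ((2:ℕ):ℝ) by norm_num, Real.rpow_natCast]
    rwa [hfun] at this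
  rw [summable_iff_vanishing_norm]
  intro ε hε
  have hε2 : 0 < ε ^ 2 / B := by positivity
  obtain ⟨s, hs⟩ := summable_iff_vanishing_norm.1 hc2 (ε ^ 2 / B) hε2
  refine ⟨s, fun t ht => ?_⟩
  have h1 : ‖∑ i ∈ t, c i • f i‖ ^ 2 ≤ B * ∑ i ∈ t, ‖c i‖ ^ 2 :=
    aux_finite_bessel f B hB.le hf c t
  have h2 : ∑ i ∈ t, ‖c i‖ ^ (2:ℕ) < ε ^ 2 / B := by
    have := hs t ht
    have habs : ‖∑ i ∈ t, ‖c i‖ ^ (2:ℕ)‖ = ∑ i ∈ t, ‖c i‖ ^ (2:ℕ) :=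
      Real.norm_of_nonneg (Finset.sum_nonneg fun _ _ => sq_nonneg _)
    rwa [habs] at this
  have h3 : ‖∑ i ∈ t, c i • f i‖ ^ 2 < ε ^ 2 := by
    calc ‖∑ i ∈ t, c i • f i‖ ^ 2 ≤ B * ∑ i ∈ t, ‖c i‖ ^ 2 := h1
    _ < B * (ε ^ 2 / B) := by
      exact mul_lt_mul_of_pos_left h2 hB
    _ = ε ^ 2 := by field_simp
  exact lt_of_pow_lt_pow_left₀ 2 hε.le h3

end Aux2

/-- `F = {f i}` is a `K`-frame iff the synthesis map
`T_F : ℓ²(I) → H` is well defined (the series `Σ cᵢ fᵢ` converges for all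
`c ∈ ℓ²`) and `R(K) ⊆ R(T_F)`.  Moreover, in the backward direction `F` is a
`K`-frame with lower bound `1/(‖T_F†‖²‖K‖²)`, where `T_F†` is the (Moore–Penrose)
pseudo-inverse of the synthesis operator `T_F`. -/
theorem stmt_2 {H : Type*} [NormedAddCommGroup H] [InnerProductSpace ℂ H]
    [CompleteSpace H] [TopologicalSpace.SeparableSpace H]
    {I : Type*} [Countable I]
    (f : I → H) (K : H →L[ℂ] H) :
    ((∃ A > (0 : ℝ), ∃ B > (0 : ℝ), ∀ x : H,
        Summable (fun i => ‖⟪x, f i⟫‖ ^ 2) ∧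
        A * ‖(ContinuousLinearMap.adjoint K) x‖ ^ 2 ≤ ∑' i, ‖⟪x, f i⟫‖ ^ 2 ∧
        ∑' i, ‖⟪x, f i⟫‖ ^ 2 ≤ B * ‖x‖ ^ 2) ↔
      ((∀ c : lp (fun _ : I => ℂ) 2, Summable fun i => c i • f i) ∧
        Set.range ⇑K ⊆
          {x : H | ∃ c : lp (fun _ : I => ℂ) 2, HasSum (fun i => c i • f i) x})) ∧
    (∀ T : lp (fun _ : I => ℂ) 2 →L[ℂ] H,
      (∀ c : lp (fun _ : I => ℂ) 2, HasSum (fun i => c i • f i) (T c)) →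
      ∀ Td : H →L[ℂ] lp (fun _ : I => ℂ) 2,
        T ∘L Td ∘L T = T → Td ∘L T ∘L Td = Td →
        IsSelfAdjoint (T ∘L Td) → IsSelfAdjoint (Td ∘L T) →
        Set.range ⇑K ⊆ Set.range ⇑T →
        ∀ x : H, (1 / (‖Td‖ ^ 2 * ‖K‖ ^ 2)) * ‖(ContinuousLinearMap.adjoint K) x‖ ^ 2 ≤
          ∑' i, ‖⟪x, f i⟫‖ ^ 2) := by
  constructor
  · -- the equivalence
    constructor
    · rintro ⟨A, hA, B, hB, hf⟩
      have hsummable : ∀ c : lp (fun _ : I => ℂ) 2, Summable fun i => c i • f i :=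
        fun c => aux_bessel_summable f B hB (fun x => ⟨(hf x).1, (hf x).2.2⟩) c
      refine ⟨hsummable, ?_⟩
      obtain ⟨T, hT⟩ := aux_synthesis f hsummable
      rintro y ⟨z, rfl⟩
      have hmaj : ∀ x : H, ‖(⟪x, K z⟫ : ℂ)‖ ≤
          (Real.sqrt (1 / A) * ‖z‖) * ‖ContinuousLinearMap.adjoint T x‖ := by
        intro x
        have h1 : A * ‖ContinuousLinearMap.adjoint K x‖ ^ 2 ≤
            ‖ContinuousLinearMap.adjoint T x‖ ^ 2 := by
          rw [← (aux_adjoint f T hT x).2]; exact (hf x).2.1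
        have h2 : ‖ContinuousLinearMap.adjoint K x‖ ≤
            Real.sqrt (1 / A) * ‖ContinuousLinearMap.adjoint T x‖ := by
          have hsq : ‖ContinuousLinearMap.adjoint K x‖ ^ 2 ≤
              (Real.sqrt (1 / A) * ‖ContinuousLinearMap.adjoint T x‖) ^ 2 := by
            rw [mul_pow, Real.sq_sqrt (by positivity : (0:ℝ) ≤ 1 / A), one_div,
              inv_mul_eq_div, le_div_iff₀ hA]
            linarith
          exact le_of_pow_le_pow_left₀ two_ne_zero (by positivity) hsq
        calc ‖(⟪x, K z⟫ : ℂ)‖ = ‖(⟪ContinuousLinearMap.adjoint K x, z⟫ : ℂ)‖ := by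
              rw [ContinuousLinearMap.adjoint_inner_left]
        _ ≤ ‖ContinuousLinearMap.adjoint K x‖ * ‖z‖ := norm_inner_le_norm _ _
        _ ≤ (Real.sqrt (1 / A) * ‖ContinuousLinearMap.adjoint T x‖) * ‖z‖ :=
              mul_le_mul_of_nonneg_right h2 (norm_nonneg z)
        _ = (Real.sqrt (1 / A) * ‖z‖) * ‖ContinuousLinearMap.adjoint T x‖ := by ring
      obtain ⟨c, hc⟩ := aux_majorization T (K z) _ hmaj
      exact ⟨c, hc ▸ hT c⟩
    · rintro ⟨hsum, hrange⟩
      obtain ⟨T, hT⟩ := aux_synthesis f hsum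
      have hrange' : Set.range ⇑K ⊆ Set.range ⇑T := by
        intro y hy
        obtain ⟨c, hc⟩ := hrange hy
        exact ⟨c, (hT c).unique hc⟩
      obtain ⟨L, hL⟩ := aux_factor T K hrange'
      refine ⟨1 / (‖L‖ ^ 2 + 1), by positivity, ‖T‖ ^ 2 + 1, by positivity, fun x => ?_⟩
      obtain ⟨hsummb, htsum⟩ := aux_adjoint f T hT x
      refine ⟨hsummb, ?_, ?_⟩
      · rw [htsum]
        have hKL : K = T ∘L L := by
          ext v; exact (hL v).symm
        have h1 : ‖ContinuousLinearMap.adjoint K x‖ ≤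
            ‖L‖ * ‖ContinuousLinearMap.adjoint T x‖ := by
          rw [hKL, ContinuousLinearMap.adjoint_comp]
          calc ‖(ContinuousLinearMap.adjoint L ∘L ContinuousLinearMap.adjoint T) x‖
              = ‖ContinuousLinearMap.adjoint L (ContinuousLinearMap.adjoint T x)‖ := rfl
          _ ≤ ‖ContinuousLinearMap.adjoint L‖ * ‖ContinuousLinearMap.adjoint T x‖ :=
              (ContinuousLinearMap.adjoint L).le_opNorm _
          _ = ‖L‖ * ‖ContinuousLinearMap.adjoint T x‖ := by
              rw [LinearIsometryEquiv.norm_map ContinuousLinearMap.adjoint L]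
        have hsq : ‖ContinuousLinearMap.adjoint K x‖ ^ 2 ≤
            (‖L‖ ^ 2 + 1) * ‖ContinuousLinearMap.adjoint T x‖ ^ 2 := by
          nlinarith [norm_nonneg (ContinuousLinearMap.adjoint K x),
            norm_nonneg (ContinuousLinearMap.adjoint T x), norm_nonneg L,
            sq_nonneg (‖ContinuousLinearMap.adjoint T x‖)]
        have hden : (0:ℝ) < ‖L‖ ^ 2 + 1 := by positivity
        rw [one_div, inv_mul_le_iff₀ hden]
        linarith
      · rw [htsum]
        have h2 : ‖ContinuousLinearMap.adjoint T x‖ ≤ ‖T‖ * ‖x‖ := by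
          calc ‖ContinuousLinearMap.adjoint T x‖
              ≤ ‖ContinuousLinearMap.adjoint T‖ * ‖x‖ :=
              (ContinuousLinearMap.adjoint T).le_opNorm x
          _ = ‖T‖ * ‖x‖ := by rw [LinearIsometryEquiv.norm_map ContinuousLinearMap.adjoint T]
        nlinarith [norm_nonneg x, norm_nonneg (ContinuousLinearMap.adjoint T x),
          norm_nonneg T, sq_nonneg (‖x‖)]
  · -- the lower bound with the pseudo-inverse
    intro T hT Td h1 h2 h3 h4 hr x
    obtain ⟨hsummb, htsum⟩ := aux_adjoint f T hT x
    rw [htsum]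
    by_cases hz : ‖Td‖ ^ 2 * ‖K‖ ^ 2 = 0
    · rw [hz]
      simp only [div_zero, zero_mul]
      positivity
    · have hpos : (0:ℝ) < ‖Td‖ ^ 2 * ‖K‖ ^ 2 :=
        lt_of_le_of_ne (by positivity) (Ne.symm hz)
      have hP : ∀ y : H, (T ∘L Td) (K y) = K y := by
        intro y
        obtain ⟨c, hc⟩ := hr (Set.mem_range_self y)
        rw [← hc]
        have := ContinuousLinearMap.ext_iff.1 h1 c
        simpa using this
      have hKP : K = (T ∘L Td) ∘L K := by
        ext y
        simp only [ContinuousLinearMap.comp_apply]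
        exact (hP y).symm
      have hadj : ContinuousLinearMap.adjoint K = ContinuousLinearMap.adjoint K ∘L
          (ContinuousLinearMap.adjoint Td ∘L ContinuousLinearMap.adjoint T) := by
        conv_lhs => rw [hKP]
        rw [ContinuousLinearMap.adjoint_comp, ContinuousLinearMap.adjoint_comp]
      have hb : ‖ContinuousLinearMap.adjoint K x‖ ≤
          ‖K‖ * (‖Td‖ * ‖ContinuousLinearMap.adjoint T x‖) := by
        conv_lhs => rw [hadj]
        calc ‖(ContinuousLinearMap.adjoint K ∘L (ContinuousLinearMap.adjoint Td ∘L
              ContinuousLinearMap.adjoint T)) x‖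
            = ‖ContinuousLinearMap.adjoint K (ContinuousLinearMap.adjoint Td
              (ContinuousLinearMap.adjoint T x))‖ := rfl
        _ ≤ ‖ContinuousLinearMap.adjoint K‖ * ‖ContinuousLinearMap.adjoint Td
              (ContinuousLinearMap.adjoint T x)‖ :=
            (ContinuousLinearMap.adjoint K).le_opNorm _
        _ ≤ ‖ContinuousLinearMap.adjoint K‖ * (‖ContinuousLinearMap.adjoint Td‖ *
              ‖ContinuousLinearMap.adjoint T x‖) := by
            exact mul_le_mul_of_nonneg_left
              ((ContinuousLinearMap.adjoint Td).le_opNorm _) (norm_nonneg _)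
        _ = ‖K‖ * (‖Td‖ * ‖ContinuousLinearMap.adjoint T x‖) := by
            rw [LinearIsometryEquiv.norm_map ContinuousLinearMap.adjoint K,
              LinearIsometryEquiv.norm_map ContinuousLinearMap.adjoint Td]
      rw [one_div, inv_mul_le_iff₀ hpos]
      nlinarith [norm_nonneg (ContinuousLinearMap.adjoint K x),
        norm_nonneg (ContinuousLinearMap.adjoint T x), norm_nonneg K, norm_nonneg Td]
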